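/- arXiv:2305.16081 — 4 statements merged into one kernel-verified Lean document; each statement's English description precedes it below -/
import Mathlib

section
/- If k ≥ 2, 0 < w < 1, 0 < α < 1, and the four inequalities (I1) 1/k < α(1 − w/k)/(1 − w), (I2) (w−β)/w < α(1 − w + β)/(1 − w), (I3) (1 − w − w/(k−1) + β)/(1 − w) < α(w−β)/w, (I4) (w/k)/(1−w) < α(1 − w/k)/w all hold with 0 ≤ β < w/(k−1), then w² < α³k + 2αw. -/
/-- Combining the four inequalities of the approximate WEFX analysis yields
`w² < α³·k + 2·α·w`. -/
theorem four_inequalities_imply_bound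
    (k : ℕ) (hk : 2 ≤ k) (w α β : ℝ)
    (hw0 : 0 < w) (hw1 : w < 1) (hα0 : 0 < α) (hα1 : α < 1)
    (hβ0 : 0 ≤ β) (hβ : β < w / ((k : ℝ) - 1))
    (I1 : 1 / (k : ℝ) < α * ((1 - w / k) / (1 - w)))
    (I2 : (w - β) / w < α * ((1 - w + β) / (1 - w)))
    (I3 : (1 - w - w / ((k : ℝ) - 1) + β) / (1 - w) < α * ((w - β) / w))
    (I4 : (w / k) / (1 - w) < α * ((1 - w / k) / w)) :
    w ^ 2 < α ^ 3 * k + 2 * α * w := by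
  have hk2 : (2:ℝ) ≤ (k:ℝ) := by exact_mod_cast hk
  have hd : (0:ℝ) < 1 - w := by linarith
  have hkm : (0:ℝ) < (k:ℝ) - 1 := by linarith
  have hkpos : (0:ℝ) < (k:ℝ) := by linarith
  have hkne : (k:ℝ) ≠ 0 := ne_of_gt hkpos
  have hwne : w ≠ 0 := ne_of_gt hw0
  have hdne : (1:ℝ) - w ≠ 0 := ne_of_gt hd
  have hkmne : (k:ℝ) - 1 ≠ 0 := ne_of_gt hkm
  -- clear denominators
  have hβ' : β * ((k:ℝ) - 1) < w := (lt_div_iff₀ hkm).mp hβ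
  -- hβ : β * (k-1) < w  (maybe β * ((k:ℝ)-1) < w * 1)
  have I4' : w * w < α * ((k:ℝ) - w) * (1 - w) := by
    rw [← mul_div_assoc, div_lt_div_iff₀ hd hw0] at I4
    have := mul_lt_mul_of_pos_left I4 hkpos
    have e1 : (k:ℝ) * (w / k * w) = w * w := by field_simp
    have e2 : (k:ℝ) * (α * (1 - w / k) * (1 - w)) = α * ((k:ℝ) - w) * (1 - w) := by
      field_simp
    rw [e1, e2] at this
    exact this
  have I2' : (w - β) * (1 - w) < α * (1 - w + β) * w := by
    rw [← mul_div_assoc, div_lt_div_iff₀ hw0 hd] at I2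
    linarith
  have I3' : (1 - w - w / ((k:ℝ) - 1) + β) * w < α * (w - β) * (1 - w) := by
    rw [← mul_div_assoc, div_lt_div_iff₀ hd hw0] at I3
    linarith
  -- chain I3' and α * I2'
  have hA : (1 - w - w / ((k:ℝ) - 1) + β) * w < α ^ 2 * (1 - w + β) * w := by
    have h2 := mul_lt_mul_of_pos_left I2' hα0
    nlinarith
  have hA2 : 1 - w - w / ((k:ℝ) - 1) + β < α ^ 2 * (1 - w + β) := by
    exact lt_of_mul_lt_mul_right hA hw0.le
  have hw' : 1 - w - w / ((k:ℝ) - 1) < α ^ 2 := by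
    nlinarith [sq_nonneg α, mul_nonneg hβ0 (sub_nonneg.mpr hα1.le)]
  have hkw : (k:ℝ) * (1 - w) < α ^ 2 * k + 2 * w := by
    have h1 : (k:ℝ) * (w / ((k:ℝ)-1)) ≤ 2 * w := by
      rw [← mul_div_assoc, div_le_iff₀ hkm]
      nlinarith
    nlinarith [mul_lt_mul_of_pos_left hw' hkpos]
  have h := mul_lt_mul_of_pos_left hkw hα0
  have hpos : 0 < α * (w * (1 - w)) := mul_pos hα0 (mul_pos hw0 hd)
  have eq1 : α * ((k:ℝ) - w) * (1 - w) = α * ((k:ℝ) * (1 - w)) - α * (w * (1 - w)) := by ring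
  have eq2 : α * (α ^ 2 * (k:ℝ) + 2 * w) = α ^ 3 * k + 2 * α * w := by ring
  rw [eq1] at I4'
  rw [eq2] at h
  have esq : w ^ 2 = w * w := sq w
  linarith
end

section
/- For w∈(0,1), integer m ≥ k ≥ 2, and α = w/(2·m^{1/3}), the inequality w² < α³k + 2αw is false; hence the four inequalities I1–I4 from the approximate WEFX analysis cannot simultaneously hold with this choice of α. -/
/-- For `w ∈ (0,1)`, integers `m ≥ k ≥ 2` and `α = w/(2·m^{1/3})`, the inequality
`w² < α³k + 2αw` is false; hence the four inequalities I1–I4 cannot simultaneously hold. -/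
theorem approx_factor_contradiction
    (w : ℝ) (hw0 : 0 < w) (hw1 : w < 1) (m k : ℕ) (hk : 2 ≤ k) (hkm : k ≤ m) :
    ¬ (w ^ 2 < (w / (2 * (m : ℝ) ^ ((1 : ℝ) / 3))) ^ 3 * k
        + 2 * (w / (2 * (m : ℝ) ^ ((1 : ℝ) / 3))) * w) := by
  push_neg
  set t : ℝ := (m : ℝ) ^ ((1 : ℝ) / 3) with ht
  have hm2 : (2 : ℝ) ≤ (m : ℝ) := by exact_mod_cast hk.trans hkm
  have hm0 : (0 : ℝ) ≤ (m : ℝ) := by linarith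
  have ht3 : t ^ 3 = (m : ℝ) := by
    rw [ht, ← Real.rpow_natCast ((m : ℝ) ^ ((1 : ℝ)/3)) 3, ← Real.rpow_mul hm0]
    norm_num
  have ht87 : (8 : ℝ) / 7 ≤ t := by
    by_contra h
    push_neg at h
    have ht0 : 0 ≤ t := Real.rpow_nonneg hm0 _
    have : t ^ 3 < (8/7 : ℝ) ^ 3 := by
      exact pow_lt_pow_left₀ h ht0 (by norm_num)
    rw [ht3] at this
    norm_num at this
    linarith
  have ht0 : (1 : ℝ) ≤ t := by linarith
  have hkm' : (k : ℝ) ≤ (m : ℝ) := by exact_mod_cast hkm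
  have h1 : (w / (2 * t)) ^ 3 * k ≤ w ^ 2 / 8 := by
    have : (w / (2 * t)) ^ 3 * k = w ^ 3 * k / (8 * t ^ 3) := by ring
    rw [this, ht3]
    rw [div_le_div_iff₀ (by linarith) (by norm_num)]
    have hw3 : w ^ 3 ≤ w ^ 2 := by nlinarith
    nlinarith [mul_le_mul_of_nonneg_left hkm' (by positivity : (0:ℝ) ≤ w ^ 3),
      mul_le_mul_of_nonneg_right hw3 hm0]
  have h2 : 2 * (w / (2 * t)) * w ≤ 7 * w ^ 2 / 8 := by
    have : 2 * (w / (2 * t)) * w = w ^ 2 / t := by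
      field_simp
    rw [this, div_le_div_iff₀ (by linarith) (by norm_num)]
    nlinarith
  linarith
end

section
/- In the greedy bag-filling partition where items are assigned in descending order of value v_2 always to a currently minimum-value bundle: for any two resulting bundles P_i and P_j with v_2(P_i) < v_2(P_j), we have v_2(P_i) ≥ v_2(P_j ∖ {g}) for every item g ∈ P_j. -/
open Finset

/-- Greedy bag-filling lemma: items (indexed by pick order, descending `v₂`-values) are each
assigned to a bundle of minimum current value.  For any two resulting bundles `P_i`, `P_j`
with `v₂(P_i) < v₂(P_j)`, removing any single item from `P_j` makes its value at most
`v₂(P_i)`. -/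
theorem greedy_partition_lemma
    (T W : ℕ) (v : Fin T → ℝ) (hv : ∀ t, 0 ≤ v t)
    (hdesc : ∀ s t : Fin T, s ≤ t → v t ≤ v s)
    (assign : Fin T → Fin (W + 1))
    (hgreedy : ∀ t : Fin T, ∀ b : Fin (W + 1),
      ∑ s ∈ univ.filter (fun s => s < t ∧ assign s = assign t), v s ≤
      ∑ s ∈ univ.filter (fun s => s < t ∧ assign s = b), v s)
    (i j : Fin (W + 1))
    (hij : ∑ s ∈ univ.filter (fun s => assign s = i), v s <
           ∑ s ∈ univ.filter (fun s => assign s = j), v s) :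
    ∀ t : Fin T, assign t = j →
      (∑ s ∈ univ.filter (fun s => assign s = j), v s) - v t ≤
      ∑ s ∈ univ.filter (fun s => assign s = i), v s := by
  intro t ht
  set S := univ.filter (fun s => assign s = j) with hS
  have htS : t ∈ S := by simp [hS, ht]
  have hne : S.Nonempty := ⟨t, htS⟩
  set m := S.max' hne with hm
  have hmS : m ∈ S := S.max'_mem hne
  have hmj : assign m = j := by simpa [hS] using hmS
  have htm : t ≤ m := S.le_max' t htS
  have h1 : (∑ s ∈ S, v s) - v t ≤ (∑ s ∈ S, v s) - v m := by
    have := hdesc t m htm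
    linarith
  have h2 : (∑ s ∈ S, v s) - v m = ∑ s ∈ S.erase m, v s := by
    rw [Finset.sum_erase_eq_sub hmS]
  have h3 : S.erase m = univ.filter (fun s => s < m ∧ assign s = j) := by
    ext s
    simp only [hS, mem_erase, mem_filter, mem_univ, true_and]
    constructor
    · rintro ⟨hne', hs⟩
      exact ⟨lt_of_le_of_ne (S.le_max' s (by simp [hS, hs])) hne', hs⟩
    · rintro ⟨hlt, hs⟩
      exact ⟨ne_of_lt hlt, hs⟩
  have h4 : ∑ s ∈ univ.filter (fun s => s < m ∧ assign s = j), v s ≤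
      ∑ s ∈ univ.filter (fun s => s < m ∧ assign s = i), v s := by
    have := hgreedy m i
    rwa [hmj] at this
  have h5 : ∑ s ∈ univ.filter (fun s => s < m ∧ assign s = i), v s ≤
      ∑ s ∈ univ.filter (fun s => assign s = i), v s := by
    apply Finset.sum_le_sum_of_subset_of_nonneg
    · intro s hs
      simp only [mem_filter, mem_univ, true_and] at hs ⊢
      exact hs.2
    · intro s _ _
      exact hv s
  calc (∑ s ∈ S, v s) - v t ≤ (∑ s ∈ S, v s) - v m := h1
    _ = ∑ s ∈ S.erase m, v s := h2
    _ ≤ _ := by rw [h3]; exact le_trans h4 h5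
end

section
/- For weights α∈(0,1) and the function f(α) = min{α/(1−α), (1−α)/(αφ), φ(1−α)/(α(φ+1))} with φ=(1+√5)/2, the maximum of f over (0,1) is attained at the α where α/(1−α) = (1−α)/(αφ), and the maximal value is strictly less than 1. -/
noncomputable def gold : ℝ := (1 + Real.sqrt 5) / 2

/-- The minimum of the three approximation ratios arising in the two-agent counterexample. -/
noncomputable def f (α : ℝ) : ℝ :=
  min (α / (1 - α)) (min ((1 - α) / (α * gold)) (gold * (1 - α) / (α * (gold + 1))))

/-!
Since `φ + 1 = φ²`, the third ratio coincides with the second, so `f` is the minimum of the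
increasing `α / (1 - α)` and the decreasing `(1 - α) / (α φ)`. Its maximum is therefore taken
where they cross, at `α = 1 / (1 + √φ)`, with value `1 / √φ < 1`.
-/

open Set Real

lemma min_le_of_monotoneOn_of_antitoneOn {ι κ : Type*} [LinearOrder ι] [LinearOrder κ]
    {s : Set ι} {g h : ι → κ} (hg : MonotoneOn g s) (hh : AntitoneOn h s) {a x : ι} (ha : a ∈ s) (hx : x ∈ s)
    (hcross : g a = h a) : min (g x) (h x) ≤ g a := by
  rcases le_total x a with hxa | hax
  · exact (min_le_left _ _).trans (hg hx ha hxa)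
  · exact (min_le_right _ _).trans ((hh ha hx hax).trans hcross.ge)

lemma monotoneOn_div_one_sub : MonotoneOn (fun x : ℝ ↦ x / (1 - x)) (Iio 1) := by
  intro x hx y hy hxy
  have hx' : 0 < 1 - x := sub_pos.2 hx
  have hy' : 0 < 1 - y := sub_pos.2 hy
  rw [div_le_div_iff₀ hx' hy']
  nlinarith

lemma antitoneOn_one_sub_div_mul {c : ℝ} (hc : 0 < c) :
    AntitoneOn (fun x : ℝ ↦ (1 - x) / (x * c)) (Ioi 0) := by
  intro x hx y hy hxy
  have hx' : 0 < x * c := mul_pos hx hc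
  have hy' : 0 < y * c := mul_pos hy hc
  rw [div_le_div_iff₀ hy' hx']
  nlinarith [mul_le_mul_of_nonneg_right hxy hc.le]

lemma gold_eq_goldenRatio : gold = goldenRatio := rfl

lemma gold_mul_div_mul_gold_add_one (α : ℝ) :
    gold * (1 - α) / (α * (gold + 1)) = (1 - α) / (α * gold) := by
  rw [gold_eq_goldenRatio, ← goldenRatio_sq, sq, mul_left_comm,
    mul_div_mul_left _ _ goldenRatio_ne_zero]

lemma f_eq_min (α : ℝ) : f α = min (α / (1 - α)) ((1 - α) / (α * gold)) := by
  rw [f, gold_mul_div_mul_gold_add_one, min_self]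

lemma crossing_div_one_sub {c : ℝ} (hc : 0 < c) :
    let a := 1 / (1 + √c)
    a / (1 - a) = 1 / √c ∧ (1 - a) / (a * c) = 1 / √c := by
  have hs : 0 < √c := sqrt_pos.2 hc
  have hone : 1 - 1 / (1 + √c) = √c / (1 + √c) := by field_simp; ring
  simp only [hone]
  constructor
  · field_simp
  · field_simp
    rw [sq_sqrt hc.le]

/-- The maximum of `f` over `(0,1)` is attained at the `α` where
`α/(1-α) = (1-α)/(αφ)`, and the maximal value is strictly less than 1. -/
theorem max_of_min_ratios :
    ∃ α : ℝ, 0 < α ∧ α < 1 ∧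
      α / (1 - α) = (1 - α) / (α * gold) ∧
      (∀ β : ℝ, 0 < β → β < 1 → f β ≤ f α) ∧
      f α < 1 := by
  have hgold : 0 < gold := goldenRatio_pos
  have hs : 1 < √gold := by rw [lt_sqrt zero_le_one, one_pow]; exact one_lt_goldenRatio
  set α := 1 / (1 + √gold)
  obtain ⟨hleft, hright⟩ := crossing_div_one_sub hgold
  have hα : α ∈ Ioo 0 1 := ⟨by positivity, by rw [div_lt_one (by positivity)]; linarith⟩
  have hfα : f α = 1 / √gold := by rw [f_eq_min, hleft, hright, min_self]
  refine ⟨α, hα.1, hα.2, hleft.trans hright.symm, fun β hβ0 hβ1 ↦ ?_, ?_⟩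
  · rw [f_eq_min, hfα, ← hleft]
    exact min_le_of_monotoneOn_of_antitoneOn (monotoneOn_div_one_sub.mono Ioo_subset_Iio_self)
      ((antitoneOn_one_sub_div_mul hgold).mono Ioo_subset_Ioi_self) hα ⟨hβ0, hβ1⟩
      (hleft.trans hright.symm)
  · rwa [hfα, div_lt_one (by linarith)]
end
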